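/- Let X be a finitely generated free abelian group, X∨ = Hom(X,ℤ) its dual, and let α ∈ X and α∨ ∈ X∨ satisfy ⟨α,α∨⟩ = 2. Define the reflection s_α : X → X by s_α(x) = x − ⟨x,α∨⟩α. Then a group homomorphism t : X → ℂˣ satisfies t ∘ s_α = t if and only if: t(α) = 1, in case α∨ ∉ 2X∨; and t(α) ∈ {1,−1}, in case α∨ ∈ 2X∨. -/

import Mathlib

/-- If all values of an integer-valued hom on a free module are even, it is divisible by 2. -/
lemma even_hom_half {X : Type*} [AddCommGroup X] [Module.Free ℤ X]
    (αv : X →+ ℤ) (h : ∀ x, Even (αv x)) : ∃ βv : X →+ ℤ, αv = βv + βv := by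
  let b := Module.Free.chooseBasis ℤ X
  let c : X →ₗ[ℤ] ℤ := b.constr ℤ (fun i => αv (b i) / 2)
  have hc : αv.toIntLinearMap = c + c := by
    refine b.ext fun i => ?_
    have := h (b i)
    obtain ⟨k, hk⟩ := this
    simp only [LinearMap.add_apply, AddMonoidHom.coe_toIntLinearMap, c, Module.Basis.constr_basis]
    omega
  refine ⟨c.toAddMonoidHom, ?_⟩
  ext x
  have := congrArg (fun f => f x) hc
  simpa using this

theorem stmt_5 {X : Type*} [AddCommGroup X] [Module.Free ℤ X] [Module.Finite ℤ X]
    (α : X) (αv : X →+ ℤ) (hpair : αv α = 2)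
    (t : X → ℂˣ) (ht : ∀ x y : X, t (x + y) = t x * t y) :
    ((¬ ∃ βv : X →+ ℤ, αv = βv + βv) →
      ((∀ x : X, t (x - αv x • α) = t x) ↔ t α = 1)) ∧
    ((∃ βv : X →+ ℤ, αv = βv + βv) →
      ((∀ x : X, t (x - αv x • α) = t x) ↔ (t α = 1 ∨ t α = -1))) := by
  -- package t as an additive hom
  have h0 : t 0 = 1 := by
    have := ht 0 0
    simp only [add_zero] at this
    exact (mul_eq_left.mp this.symm)
  let T : X →+ Additive ℂˣ :=
    { toFun := fun x => Additive.ofMul (t x)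
      map_zero' := by simp [h0]
      map_add' := fun x y => by simp [ht x y] }
  have hpow : ∀ n : ℤ, ∀ x : X, t (n • x) = t x ^ n := by
    intro n x
    have := map_zsmul T n x
    simpa [T, ← ofMul_zpow] using congrArg Additive.toMul this
  have hsub : ∀ x : X, ∀ n : ℤ, t (x - n • α) = t x * (t α ^ n)⁻¹ := by
    intro x n
    have := ht (x - n • α) (n • α)
    rw [sub_add_cancel, hpow n α] at this
    rw [this]
    group
  -- condition reformulation
  have hcond : (∀ x : X, t (x - αv x • α) = t x) ↔ ∀ x : X, t α ^ (αv x) = 1 := by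
    constructor
    · intro h x
      have := h x
      rw [hsub x (αv x)] at this
      have h2 : (t α ^ (αv x))⁻¹ = 1 := mul_left_cancel (a := t x) (by simpa using this)
      simpa using h2
    · intro h x
      rw [hsub x (αv x), h x]
      simp
  constructor
  · intro hodd
    rw [hcond]
    constructor
    · intro h
      -- some value is odd
      by_contra hne
      have h2 : t α ^ (2 : ℤ) = 1 := by rw [← hpair]; exact h α
      -- if every value were even we'd contradict hodd; so get odd value
      have : ∃ x, ¬ Even (αv x) := by
        by_contra hall
        push_neg at hall
        exact hodd (even_hom_half αv hall)
      obtain ⟨x, hx⟩ := this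
      rw [Int.not_even_iff_odd] at hx
      obtain ⟨k, hk⟩ := hx
      have hxo : t α ^ (2 * k + 1) = 1 := by rw [← hk]; exact h x
      have : t α = 1 := by
        have : t α ^ (2 * k + 1) = (t α ^ (2:ℤ)) ^ k * t α := by group
        rw [hxo, h2] at this
        simpa using this.symm
      exact hne this
    · intro h x
      rw [h]; simp
  · rintro ⟨βv, hβ⟩
    rw [hcond]
    constructor
    · intro h
      have h2 : t α ^ (2 : ℤ) = 1 := by rw [← hpair]; exact h α
      -- z^2 = 1 in ℂˣ implies z = ±1
      have hC : (t α : ℂ) ^ 2 = 1 := by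
        have := congrArg (Units.val) h2
        push_cast at this
        exact this
      have : ((t α : ℂ) - 1) * ((t α : ℂ) + 1) = 0 := by ring_nf; linear_combination hC
      rcases mul_eq_zero.mp this with h1 | h1
      · left; ext
        have h3 : (t α : ℂ) = 1 := by linear_combination h1
        simpa using h3
      · right; ext
        have h3 : (t α : ℂ) = -1 := by linear_combination h1
        simpa using h3
    · intro h x
      have hx2 : αv x = 2 * βv x := by rw [hβ]; simp; ring
      have hm : ((-1 : ℂˣ)) ^ (2:ℤ) = 1 := by
        rw [zpow_two]; simp
      rcases h with h | h <;> rw [hx2, zpow_mul, h]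
      · simp
      · rw [hm, one_zpow]
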